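/- Assume: (i) condition (C4): there is c > 1 such that G(x,z1)·G(y,z2) ≤ c·G(x,z2)·G(y,z1) whenever Q ∈ ∂D, r ∈ (0,R), x, y ∈ D \ closure(B(Q,r)) and z1, z2 ∈ D ∩ B(Q, r/4); (ii) the interior lower bound: for every c1 > 0 there is c > 0 such that G(x,y) ≥ c·|x-y|^{α-d} whenever x, y ∈ D satisfy 0 < |x-y| ≤ c1·min(ρ_D(x), ρ_D(y)). Then (Carleson's estimate) there exists a constant c > 1 such that for every Q ∈ ∂D, every r ∈ (0, κR/4), every y ∈ D \ closure(B(Q,4r)) and every x ∈ D ∩ B(Q,r): G(x,y) ≤ c·G(A_r(Q), y). -/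

import Mathlib

open Metric Set MeasureTheory

/-- Distance to the boundary of `D`. -/
noncomputable def rho {d : ℕ} (D : Set (EuclideanSpace ℝ (Fin d)))
    (x : EuclideanSpace ℝ (Fin d)) : ℝ :=
  Metric.infDist x (frontier D)

/-- `r(x,y) := max(ρ_D(x), ρ_D(y), |x-y|)`. -/
noncomputable def rxy {d : ℕ} (D : Set (EuclideanSpace ℝ (Fin d)))
    (x y : EuclideanSpace ℝ (Fin d)) : ℝ :=
  max (max (rho D x) (rho D y)) (dist x y)

/-- The set `𝓑(x,y)`. -/
noncomputable def BB {d : ℕ} (D : Set (EuclideanSpace ℝ (Fin d))) (M ε1 : ℝ)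
    (z0 x y : EuclideanSpace ℝ (Fin d)) : Set (EuclideanSpace ℝ (Fin d)) :=
  if rxy D x y < ε1 then
    {A | A ∈ D ∧ rxy D x y / M < rho D A ∧ max (dist x A) (dist y A) < 5 * rxy D x y}
  else {z0}

open Classical in
/-- `g(x) := min(G(x,z0), C1)`, with the convention `g(z0) = C1` (since `G(z0,z0) = ∞`). -/
noncomputable def gfun {d : ℕ} (G : EuclideanSpace ℝ (Fin d) → EuclideanSpace ℝ (Fin d) → ℝ)
    (z0 : EuclideanSpace ℝ (Fin d)) (C1 : ℝ) (x : EuclideanSpace ℝ (Fin d)) : ℝ :=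
  if x = z0 then C1 else min (G x z0) C1

set_option maxHeartbeats 1000000 in
/-- Carleson's estimate. -/
theorem stmt4
    {d : ℕ} (hd : 2 ≤ d)
    {D : Set (EuclideanSpace ℝ (Fin d))} (hDopen : IsOpen D) (hDbdd : Bornology.IsBounded D)
    {κ R : ℝ} (hκ0 : 0 < κ) (hκ2 : κ ≤ 1 / 2) (hR : 0 < R)
    {A : EuclideanSpace ℝ (Fin d) → ℝ → EuclideanSpace ℝ (Fin d)}
    (hfat : ∀ Q ∈ frontier D, ∀ r : ℝ, 0 < r → r < R →
      A Q r ∈ D ∧ ball (A Q r) (κ * r) ⊆ D ∩ ball Q r)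
    {α : ℝ} (hα0 : 0 < α) (hα2 : α < 2) (hαd : α < d)
    {G : EuclideanSpace ℝ (Fin d) → EuclideanSpace ℝ (Fin d) → ℝ}
    (hGsymm : ∀ x y, G x y = G y x)
    (hGpos : ∀ x ∈ D, ∀ y ∈ D, x ≠ y → 0 < G x y)
    {C0 : ℝ} (hC0 : 1 ≤ C0)
    (hGup : ∀ x ∈ D, ∀ y ∈ D, x ≠ y → G x y ≤ C0 * dist x y ^ (α - d))
    (hGlow : ∀ x ∈ D, ∀ y ∈ D, x ≠ y → dist x y ≤ rho D y / 2 →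
      C0⁻¹ * dist x y ^ (α - d) ≤ G x y)
    (hC4 : ∃ c > 1, ∀ Q ∈ frontier D, ∀ r : ℝ, 0 < r → r < R →
      ∀ x ∈ D \ closure (ball Q r), ∀ y ∈ D \ closure (ball Q r),
      ∀ z1 ∈ D ∩ ball Q (r / 4), ∀ z2 ∈ D ∩ ball Q (r / 4),
      G x z1 * G y z2 ≤ c * (G x z2 * G y z1))
    (hint : ∀ c1 : ℝ, 0 < c1 → ∃ c > 0, ∀ x ∈ D, ∀ y ∈ D, x ≠ y →
      dist x y ≤ c1 * min (rho D x) (rho D y) → c * dist x y ^ (α - d) ≤ G x y)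
 :
    ∃ c > 1, ∀ Q ∈ frontier D, ∀ r : ℝ, 0 < r → r < κ * R / 4 →
      ∀ y ∈ D \ closure (ball Q (4 * r)), ∀ x ∈ D ∩ ball Q r,
      G x y ≤ c * G (A Q r) y := by
  obtain ⟨c, hcgt, hc4⟩ := hC4
  have hcpos : 0 < c := by linarith
  set p : ℝ := α - d with hp
  have hd2 : (2:ℝ) ≤ (d:ℝ) := by exact_mod_cast hd
  have hpneg : p < 0 := by simp only [hp]; linarith
  set c1 : ℝ := (1 + 9/(2*κ))/κ with hc1def
  have hc1pos : 0 < c1 := by positivity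
  obtain ⟨c₂, hc₂, hintc⟩ := hint c1 hc1pos
  have hbase : (0:ℝ) < 1 + 9/(2*κ) := by positivity
  have hLpow : (0:ℝ) < (1 + 9/(2*κ)) ^ p := Real.rpow_pos_of_pos hbase _
  refine ⟨max 2 (c * C0 * (3:ℝ) ^ p / (c₂ * (1 + 9/(2*κ)) ^ p)),
    lt_of_lt_of_le one_lt_two (le_max_left _ _), ?_⟩
  set cf : ℝ := max 2 (c * C0 * (3:ℝ) ^ p / (c₂ * (1 + 9/(2*κ)) ^ p)) with hcf
  intro Q hQ r hr0 hrκ y hy x hx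
  obtain ⟨hyD, hyB⟩ := hy
  obtain ⟨hxD, hxB⟩ := hx
  have hfr : ∀ z ∈ frontier D, z ∉ D := fun z hz => (hDopen.frontier_eq ▸ hz).2
  have hκR4 : 4 * r < κ * R := by linarith
  have hrR : r < R := by nlinarith
  -- the fat point at scale r
  obtain ⟨hAD, hAball⟩ := hfat Q hQ r hr0 hrR
  have hAQ : dist (A Q r) Q < r :=
    mem_ball.mp (hAball (mem_ball_self (by positivity))).2
  have hrhoA : κ * r ≤ rho D (A Q r) := by
    rw [rho]
    by_contra h
    push_neg at h
    obtain ⟨z, hz, hzd⟩ := (Metric.infDist_lt_iff ⟨Q, hQ⟩).mp h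
    exact hfr z hz ((hAball (mem_ball'.mpr hzd)).1)
  -- the reference point w at scale s
  set s : ℝ := min (9*r/(2*κ)) ((4*r/κ + R)/2) with hsdef
  have hs0 : 0 < s := lt_min (by positivity) (by positivity)
  have hsR : s < R := lt_of_le_of_lt (min_le_right _ _) (by
    rw [div_lt_iff₀ (by norm_num : (0:ℝ) < 2)]
    have : 4*r/κ < R := by rw [div_lt_iff₀ hκ0]; nlinarith
    linarith)
  have hs4r : 4*r/κ < s := by
    refine lt_min ?_ ?_
    · rw [div_lt_div_iff₀ hκ0 (by positivity)]; nlinarith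
    · have : 4*r/κ < R := by rw [div_lt_iff₀ hκ0]; nlinarith
      linarith
  have hκs : 4*r < κ * s := by
    rw [div_lt_iff₀ hκ0] at hs4r; linarith [hs4r]
  have hsle : s ≤ 9*r/(2*κ) := min_le_left _ _
  set w := A Q s with hw
  obtain ⟨hwD, hwball⟩ := hfat Q hQ s hs0 hsR
  have hwQ : dist w Q < s := mem_ball.mp (hwball (mem_ball_self (by positivity))).2
  have hQw : κ * s ≤ dist Q w := by
    by_contra h
    push_neg at h
    rw [hw] at h
    exact hfr Q hQ ((hwball (mem_ball.mpr h)).1)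
  have hrhow : κ * s ≤ rho D w := by
    rw [rho]
    by_contra h
    push_neg at h
    obtain ⟨z, hz, hzd⟩ := (Metric.infDist_lt_iff ⟨Q, hQ⟩).mp h
    exact hfr z hz ((hwball (mem_ball'.mpr hzd)).1)
  -- w is outside closure (ball Q (4r))
  have hwout : w ∈ D \ closure (ball Q (4*r)) := by
    refine ⟨hwD, fun hcl => ?_⟩
    have := closure_ball_subset_closedBall hcl
    rw [mem_closedBall, dist_comm] at this
    linarith
  -- distances
  have hxQ : dist x Q < r := mem_ball.mp hxB
  have hwx : 3*r < dist w x := by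
    have htri : dist Q w ≤ dist Q x + dist x w := dist_triangle _ _ _
    rw [dist_comm Q x] at htri
    rw [dist_comm w x]
    linarith
  have hAw3 : 3*r < dist (A Q r) w := by
    have htri : dist Q w ≤ dist Q (A Q r) + dist (A Q r) w := dist_triangle _ _ _
    rw [dist_comm Q (A Q r)] at htri
    linarith
  have hAwL : dist (A Q r) w ≤ (1 + 9/(2*κ)) * r := by
    have htri : dist (A Q r) w ≤ dist (A Q r) Q + dist Q w := dist_triangle _ _ _
    have h9 : s ≤ (9/(2*κ)) * r := by rw [hsdef]; calc
      min (9*r/(2*κ)) ((4*r/κ + R)/2) ≤ 9*r/(2*κ) := min_le_left _ _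
      _ = (9/(2*κ)) * r := by ring
    rw [dist_comm Q w] at htri
    nlinarith
  -- x ≠ y etc.
  have hxy : x ≠ y := by
    rintro rfl
    exact hyB (subset_closure (mem_ball.mpr (by linarith)))
  have hAy : A Q r ≠ y := by
    rintro rfl
    exact hyB (subset_closure (mem_ball.mpr (by linarith)))
  have hwxne : w ≠ x := fun h => by rw [h] at hwx; simp at hwx; linarith
  have hAwne : A Q r ≠ w := fun h => by rw [h] at hAw3; simp at hAw3; linarith
  -- interior lower bound for G (A Q r) w
  have hmin : κ * r ≤ min (rho D (A Q r)) (rho D w) := by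
    refine le_min hrhoA (le_trans ?_ hrhow)
    nlinarith
  have hdistle : dist (A Q r) w ≤ c1 * min (rho D (A Q r)) (rho D w) := by
    have h1 : c1 * (κ * r) ≤ c1 * min (rho D (A Q r)) (rho D w) :=
      mul_le_mul_of_nonneg_left hmin hc1pos.le
    have h2 : c1 * (κ * r) = (1 + 9/(2*κ)) * r := by
      rw [hc1def]; field_simp
    linarith [hAwL]
  have hGAw := hintc (A Q r) hAD w hwD hAwne hdistle
  have hLle : ((1 + 9/(2*κ)) * r) ^ p ≤ dist (A Q r) w ^ p :=
    Real.rpow_le_rpow_of_nonpos (by linarith) hAwL hpneg.le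
  have hm : c₂ * ((1 + 9/(2*κ)) * r) ^ p ≤ G (A Q r) w := by
    refine le_trans ?_ hGAw
    exact mul_le_mul_of_nonneg_left hLle hc₂.le
  -- upper bound for G w x
  have hGwx : G w x ≤ C0 * (3*r) ^ p := by
    refine le_trans (hGup w hwD x hxD hwxne) ?_
    have : dist w x ^ p ≤ (3*r) ^ p :=
      Real.rpow_le_rpow_of_nonpos (by linarith) hwx.le hpneg.le
    nlinarith [this]
  -- apply (C4) at radius 4r
  have h4r0 : 0 < 4*r := by linarith
  have h4rR : 4*r < R := by nlinarith
  have hxz : x ∈ D ∩ ball Q (4*r/4) := by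
    constructor
    · exact hxD
    · rw [mem_ball]; linarith
  have hAz : A Q r ∈ D ∩ ball Q (4*r/4) := by
    constructor
    · exact hAD
    · rw [mem_ball]; linarith
  have key := hc4 Q hQ (4*r) h4r0 h4rR y ⟨hyD, hyB⟩ w hwout x hxz (A Q r) hAz
  -- key : G y x * G w (A Q r) ≤ c * (G y (A Q r) * G w x)
  rw [hGsymm y x, hGsymm w (A Q r)] at key
  rw [hGsymm (A Q r) y]
  -- positivity
  have hGxy : 0 < G x y := hGpos x hxD y hyD hxy
  have hGyA : 0 < G y (A Q r) := hGpos y hyD (A Q r) hAD (Ne.symm hAy)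
  have hmpos : 0 < c₂ * ((1 + 9/(2*κ)) * r) ^ p := by
    have := Real.rpow_pos_of_pos (show (0:ℝ) < (1 + 9/(2*κ)) * r by positivity) p
    positivity
  -- the constant comparison: c * (C0 * (3*r)^p) ≤ cf * (c₂ * ((1+9/(2κ))*r)^p)
  have hKle : c * (C0 * (3*r) ^ p) ≤ cf * (c₂ * ((1 + 9/(2*κ)) * r) ^ p) := by
    have h3r : ((3:ℝ)*r) ^ p = (3:ℝ) ^ p * r ^ p :=
      Real.mul_rpow (by norm_num) hr0.le
    have hLr : ((1 + 9/(2*κ)) * r) ^ p = (1 + 9/(2*κ)) ^ p * r ^ p :=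
      Real.mul_rpow hbase.le hr0.le
    have hK : c * C0 * (3:ℝ) ^ p / (c₂ * (1 + 9/(2*κ)) ^ p) ≤ cf := le_max_right _ _
    have hrp : (0:ℝ) < r ^ p := Real.rpow_pos_of_pos hr0 p
    have hdenom : (0:ℝ) < c₂ * (1 + 9/(2*κ)) ^ p := by positivity
    have hKey : (c * C0 * (3:ℝ) ^ p / (c₂ * (1 + 9/(2*κ)) ^ p)) *
        (c₂ * (1 + 9/(2*κ)) ^ p) = c * C0 * (3:ℝ) ^ p :=
      div_mul_cancel₀ _ (ne_of_gt hdenom)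
    rw [h3r, hLr]
    calc c * (C0 * ((3:ℝ) ^ p * r ^ p))
        = (c * C0 * (3:ℝ) ^ p / (c₂ * (1 + 9/(2*κ)) ^ p)) *
            (c₂ * (1 + 9/(2*κ)) ^ p) * r ^ p := by rw [hKey]; ring
      _ ≤ cf * (c₂ * (1 + 9/(2*κ)) ^ p) * r ^ p := by
          have := mul_le_mul_of_nonneg_right
            (mul_le_mul_of_nonneg_right hK hdenom.le) hrp.le
          linarith [this]
      _ = cf * (c₂ * ((1 + 9/(2*κ)) ^ p * r ^ p)) := by ring
  -- chain everything
  have step1 : G x y * (c₂ * ((1 + 9/(2*κ)) * r) ^ p) ≤ c * (G y (A Q r) * G w x) :=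
    le_trans (mul_le_mul_of_nonneg_left hm hGxy.le) key
  have step2 : c * (G y (A Q r) * G w x) ≤ G y (A Q r) * (c * (C0 * (3*r) ^ p)) := by
    nlinarith [mul_le_mul_of_nonneg_left hGwx (mul_pos hcpos hGyA).le]
  have step3 : G y (A Q r) * (c * (C0 * (3*r) ^ p)) ≤
      G y (A Q r) * (cf * (c₂ * ((1 + 9/(2*κ)) * r) ^ p)) :=
    mul_le_mul_of_nonneg_left hKle hGyA.le
  have final : G x y * (c₂ * ((1 + 9/(2*κ)) * r) ^ p) ≤
      (cf * G y (A Q r)) * (c₂ * ((1 + 9/(2*κ)) * r) ^ p) := by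
    calc G x y * (c₂ * ((1 + 9/(2*κ)) * r) ^ p)
        ≤ c * (G y (A Q r) * G w x) := step1
      _ ≤ G y (A Q r) * (c * (C0 * (3*r) ^ p)) := step2
      _ ≤ G y (A Q r) * (cf * (c₂ * ((1 + 9/(2*κ)) * r) ^ p)) := step3
      _ = (cf * G y (A Q r)) * (c₂ * ((1 + 9/(2*κ)) * r) ^ p) := by ring
  exact le_of_mul_le_mul_right final hmpos
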